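/- arXiv:math/0610161 — 2 statements merged into one kernel-verified Lean document; each statement's English description precedes it below -/
import Mathlib

section
/- Let J be closed and φ ∈ J*. If there is no 4-chain (i,j,k,l) ∈ 𝒫 with (i,j) ∈ supp(φ) and (k,l) ∈ supp(φ), then the superclass {x_ρ : ρ ∈ O_φ} of x_φ is a single conjugacy class of U_J. -/
open Matrix BigOperators

namespace SCT

/-- Pairs of indices. -/
abbrev Pr (n : ℕ) := Fin n × Fin n

/-- A closed subset `J ⊆ {(i,j) : i < j}`:  `(i,j) ∈ J` and `(j,k) ∈ J` imply `(i,k) ∈ J`. -/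
def Closed {n : ℕ} (J : Finset (Pr n)) : Prop :=
  (∀ p ∈ J, p.1 < p.2) ∧
  ∀ i j k : Fin n, (i, j) ∈ J → (j, k) ∈ J → (i, k) ∈ J

variable {F : Type*} [Field F] [Fintype F] [DecidableEq F] {n : ℕ}

/-- `X_φ = Σ_{(i,j) ∈ J} φ_{ij} X_{ij}`. -/
def Xmat (J : Finset (Pr n)) (φ : Pr n → F) : Matrix (Fin n) (Fin n) F :=
  Matrix.of fun i j => if (i, j) ∈ J then φ (i, j) else 0

/-- `x_φ = 1 + X_φ`. -/
def xmat (J : Finset (Pr n)) (φ : Pr n → F) : Matrix (Fin n) (Fin n) F :=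
  1 + Xmat J φ

/-- `x_{ij}(t) = 1 + t X_{ij}`. -/
def xelt (i j : Fin n) (t : F) : Matrix (Fin n) (Fin n) F :=
  1 + Matrix.single i j t

/-- The pattern group `U_J`, as a set of matrices: ones on the diagonal, entries off the
diagonal vanish outside `J`. -/
def UJ (J : Finset (Pr n)) : Set (Matrix (Fin n) (Fin n) F) :=
  {M | (∀ i, M i i = 1) ∧ ∀ i j : Fin n, i ≠ j → (i, j) ∉ J → M i j = 0}

/-- `𝔫_J`: matrices supported on `J`. -/
def nJset (J : Finset (Pr n)) : Set (Matrix (Fin n) (Fin n) F) :=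
  {M | ∀ i j : Fin n, (i, j) ∉ J → M i j = 0}

/-- The functional `λ_η` evaluated at a matrix of `𝔫_J`. -/
def lam (J : Finset (Pr n)) (η : Pr n → F) (X : Matrix (Fin n) (Fin n) F) : F :=
  ∑ p ∈ J, η p * X p.1 p.2

/-- A functional with coefficients indexed by `J` evaluated at a matrix. -/
def lamSub (J : Finset (Pr n)) (η : {p // p ∈ J} → F) (X : Matrix (Fin n) (Fin n) F) : F :=
  ∑ p ∈ J.attach, η p * X p.1.1 p.1.2

/-- The two-sided orbit `O_φ = U_J X_φ U_J ⊆ 𝔫_J`. -/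
def biOrbit (J : Finset (Pr n)) (φ : Pr n → F) : Set (Matrix (Fin n) (Fin n) F) :=
  {Y | ∃ u v : Matrix (Fin n) (Fin n) F, u ∈ UJ J ∧ v ∈ UJ J ∧ Y = u * Xmat J φ * v}

/-- `(M_φ^R)_{(i,l),(j,k)} = φ_{ij}` if `k = l` and `(i,j,l) ∈ 𝒫`, else `0`. -/
def MphiR (J : Finset (Pr n)) (φ : Pr n → F) : Matrix {p // p ∈ J} {p // p ∈ J} F :=
  Matrix.of fun p q =>
    if q.1.2 = p.1.2 ∧ (p.1.1, q.1.1) ∈ J ∧ (q.1.1, p.1.2) ∈ J then φ (p.1.1, q.1.1) else 0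

/-- `(M_φ^L)_{(i,l),(j,k)} = φ_{kl}` if `i = j` and `(i,k,l) ∈ 𝒫`, else `0`. -/
def MphiL (J : Finset (Pr n)) (φ : Pr n → F) : Matrix {p // p ∈ J} {p // p ∈ J} F :=
  Matrix.of fun p q =>
    if q.1.1 = p.1.1 ∧ (p.1.1, q.1.2) ∈ J ∧ (q.1.2, p.1.2) ∈ J then φ (q.1.2, p.1.2) else 0

/-- `(M_L^η)_{(j,k),(i,l)} = η_{ik}` if `l = j` and `(i,j,k) ∈ 𝒫`, else `0`. -/
def MetaL (J : Finset (Pr n)) (η : Pr n → F) : Matrix {p // p ∈ J} {p // p ∈ J} F :=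
  Matrix.of fun p q =>
    if q.1.2 = p.1.1 ∧ (q.1.1, p.1.1) ∈ J ∧ (p.1.1, p.1.2) ∈ J then η (q.1.1, p.1.2) else 0

/-- `(M_R^η)_{(j,k),(i,l)} = η_{jl}` if `k = i` and `(j,k,l) ∈ 𝒫`, else `0`. -/
def MetaR (J : Finset (Pr n)) (η : Pr n → F) : Matrix {p // p ∈ J} {p // p ∈ J} F :=
  Matrix.of fun p q =>
    if q.1.1 = p.1.2 ∧ (p.1.1, p.1.2) ∈ J ∧ (p.1.2, q.1.2) ∈ J then η (p.1.1, q.1.2) else 0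

/-- `corank(η) = rank(M_L^η)`. -/
noncomputable def corank (J : Finset (Pr n)) (η : Pr n → F) : ℕ := (MetaL J η).rank

/-- `(M_φ^η)_{(i,j),(k,l)} = φ_{jk} η_{il}` if `(i,j,k,l) ∈ 𝒫`, else `0`. -/
def Mmesh (J : Finset (Pr n)) (φ η : Pr n → F) : Matrix {p // p ∈ J} {p // p ∈ J} F :=
  Matrix.of fun p q =>
    if (p.1.2, q.1.1) ∈ J then φ (p.1.2, q.1.1) * η (p.1.1, q.1.2) else 0

/-- `(a_φ^η)_{(i,j)} = Σ_{(i,j,k) ∈ 𝒫} φ_{jk} η_{ik}`. -/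
def aVec (J : Finset (Pr n)) (φ η : Pr n → F) : {p // p ∈ J} → F :=
  fun p => ∑ k : Fin n, if (p.1.2, k) ∈ J then φ (p.1.2, k) * η (p.1.1, k) else 0

/-- `(b_φ^η)_{(j,k)} = Σ_{(i,j,k) ∈ 𝒫} φ_{ij} η_{ik}`. -/
def bVec (J : Finset (Pr n)) (φ η : Pr n → F) : {p // p ∈ J} → F :=
  fun p => ∑ i : Fin n, if (i, p.1.1) ∈ J then φ (i, p.1.1) * η (i, p.1.2) else 0

/-- `φ` meshes with `η`. -/
def Meshes (J : Finset (Pr n)) (φ η : Pr n → F) : Prop :=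
  (∃ b : {p // p ∈ J} → F, (Mmesh J φ η).mulVec b = -aVec J φ η) ∧
  ∀ v : {p // p ∈ J} → F, (Mmesh J φ η).mulVec v = 0 → bVec J φ η ⬝ᵥ v = 0

/-- The supercharacter `χ^η` evaluated at `x_φ`. -/
noncomputable def superchar (J : Finset (Pr n)) (θ : AddChar F ℂ) (η φ : Pr n → F) : ℂ :=
  ((Fintype.card F : ℂ) ^ corank J η / (Nat.card (biOrbit J φ) : ℂ)) *
    ∑ᶠ Y ∈ biOrbit J φ, (starRingEnd ℂ) (θ (lam J η Y))

/-- `χ` restricted to `U` is the character of an irreducible complex representation of `U`. -/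
def IsIrredCharOn (U : Set (Matrix (Fin n) (Fin n) F))
    (χ : Matrix (Fin n) (Fin n) F → ℂ) : Prop :=
  ∃ d : ℕ, 0 < d ∧ ∃ ρ : Matrix (Fin n) (Fin n) F → Matrix (Fin d) (Fin d) ℂ,
    ρ 1 = 1 ∧
    (∀ A ∈ U, ∀ B ∈ U, ρ (A * B) = ρ A * ρ B) ∧
    (∀ W : Submodule ℂ (Fin d → ℂ), (∀ A ∈ U, ∀ w ∈ W, (ρ A).mulVec w ∈ W) → W = ⊥ ∨ W = ⊤) ∧
    ∀ A ∈ U, (ρ A).trace = χ A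

/-- The full set of positive roots. -/
def Jfull (n : ℕ) : Finset (Pr n) := Finset.univ.filter fun p : Pr n => p.1 < p.2

/-!  The total order and partial sum on positive roots. -/

/-- `α < β` in the total order: `(r,s) < (i,j)` iff `r > i`, or `r = i` and `s > j`. -/
def rlt {n : ℕ} (a b : Pr n) : Prop := b.1 < a.1 ∨ (a.1 = b.1 ∧ b.2 < a.2)

/-- `α + β` is defined in `R⁺`. -/
def rdef {n : ℕ} (a b : Pr n) : Prop := a.2 = b.1 ∨ b.2 = a.1

/-- The sum `α + β` (when defined). -/
def rsum {n : ℕ} (a b : Pr n) : Pr n := if a.2 = b.1 then (a.1, b.2) else (b.1, a.2)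

/-! Algebra groups. -/

/-- The algebra group `H = 1 + 𝔫`. -/
def algH (nn : Submodule F (Matrix (Fin n) (Fin n) F)) : Set (Matrix (Fin n) (Fin n) F) :=
  {M | ∃ X ∈ nn, M = 1 + X}

/-- The two sided orbit `H X H ⊆ 𝔫` of `X`. -/
def algBiOrbit (nn : Submodule F (Matrix (Fin n) (Fin n) F))
    (X : Matrix (Fin n) (Fin n) F) : Set nn :=
  {Y | ∃ u ∈ algH nn, ∃ v ∈ algH nn, (Y : Matrix (Fin n) (Fin n) F) = u * X * v}

/-- The right orbit `{λ · u : u ∈ H} ⊆ 𝔫*` of a functional `λ`, described via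
`λ' = λ · u⁻¹ ↔ (∀ Y, λ' Y = λ (Y u))`. -/
def algRightOrbit (nn : Submodule F (Matrix (Fin n) (Fin n) F))
    (l : Module.Dual F nn) : Set (Module.Dual F nn) :=
  {l' | ∃ u ∈ algH nn, ∀ (Y : nn) (h : (Y : Matrix (Fin n) (Fin n) F) * u ∈ nn),
      l' Y = l ⟨(Y : Matrix (Fin n) (Fin n) F) * u, h⟩}

/-- The supercharacter `χ^λ` of an algebra group, evaluated at `1 + X`. -/
noncomputable def algSuperchar (nn : Submodule F (Matrix (Fin n) (Fin n) F))
    (θ : AddChar F ℂ) (l : Module.Dual F nn) (X : Matrix (Fin n) (Fin n) F) : ℂ :=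
  ((Nat.card (algRightOrbit nn l) : ℂ) / (Nat.card (algBiOrbit nn X) : ℂ)) *
    ∑ᶠ Y ∈ algBiOrbit nn X, (starRingEnd ℂ) (θ (l Y))

/-! Algebra groups with a fixed basis `X_1, …, X_d` of `𝔫`. -/

/-- `X_ρ = Σ_i ρ_i X_i`. -/
def bigX {d : ℕ} (Xb : Fin d → Matrix (Fin n) (Fin n) F) (ρ : Fin d → F) :
    Matrix (Fin n) (Fin n) F :=
  ∑ i : Fin d, ρ i • Xb i

/-- The two-sided orbit of `X_φ`, in coordinates. -/
def algCoeffBiOrbit {d : ℕ} (Xb : Fin d → Matrix (Fin n) (Fin n) F) (φ : Fin d → F) :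
    Set (Fin d → F) :=
  {ρ | ∃ ζ₁ ζ₂ : Fin d → F,
      (1 + bigX Xb ζ₁) * bigX Xb φ * (1 + bigX Xb ζ₂) = bigX Xb ρ}

/-- The right orbit of `λ_η`, in coordinates (`λ_η(X_ν) = η ⬝ᵥ ν`). -/
def algCoeffRightOrbit {d : ℕ} (Xb : Fin d → Matrix (Fin n) (Fin n) F) (η : Fin d → F) :
    Set (Fin d → F) :=
  {η' | ∃ ζ : Fin d → F, ∀ ρ ν : Fin d → F,
      bigX Xb ρ * (1 + bigX Xb ζ) = bigX Xb ν → η' ⬝ᵥ ρ = η ⬝ᵥ ν}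

/-- The supercharacter `χ^η` of an algebra group with fixed basis, evaluated at `x_φ`. -/
noncomputable def algCoeffSuperchar {d : ℕ} (Xb : Fin d → Matrix (Fin n) (Fin n) F)
    (θ : AddChar F ℂ) (η φ : Fin d → F) : ℂ :=
  ((Nat.card (algCoeffRightOrbit Xb η) : ℂ) / (Nat.card (algCoeffBiOrbit Xb φ) : ℂ)) *
    ∑ᶠ ρ ∈ algCoeffBiOrbit Xb φ, (starRingEnd ℂ) (θ (η ⬝ᵥ ρ))

/-- `(C_i)_{jk} = c_{ij}^k`. -/
def Cleft {d : ℕ} (c : Fin d → Fin d → Fin d → F) (i : Fin d) : Matrix (Fin d) (Fin d) F :=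
  Matrix.of fun j k => c i j k

/-- `(C^j)_{ik} = c_{ij}^k`. -/
def Cright {d : ℕ} (c : Fin d → Fin d → Fin d → F) (j : Fin d) : Matrix (Fin d) (Fin d) F :=
  Matrix.of fun i k => c i j k

/-- `(M_φ^η)_{ij} = φ C_i C^j η`. -/
def algMmesh {d : ℕ} (c : Fin d → Fin d → Fin d → F) (φ η : Fin d → F) :
    Matrix (Fin d) (Fin d) F :=
  Matrix.of fun i j => φ ⬝ᵥ (Cleft c i * Cright c j).mulVec η

/-- `(a_φ^η)_i = φ C_i η`. -/
def algAVec {d : ℕ} (c : Fin d → Fin d → Fin d → F) (φ η : Fin d → F) : Fin d → F :=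
  fun i => φ ⬝ᵥ (Cleft c i).mulVec η

/-- `(b_φ^η)_j = φ C^j η`. -/
def algBVec {d : ℕ} (c : Fin d → Fin d → Fin d → F) (φ η : Fin d → F) : Fin d → F :=
  fun j => φ ⬝ᵥ (Cright c j).mulVec η

/-- `φ` meshes with `η` (algebra-group version). -/
def algMeshes {d : ℕ} (c : Fin d → Fin d → Fin d → F) (φ η : Fin d → F) : Prop :=
  (∃ b : Fin d → F, (algMmesh c φ η).mulVec b = -algAVec c φ η) ∧
  ∀ v : Fin d → F, (algMmesh c φ η).mulVec v = 0 → algBVec c φ η ⬝ᵥ v = 0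

set_option linter.unusedSectionVars false
/-- auxiliary: matrices supported on `J`. -/
def SuppJ {n : ℕ} (J : Finset (Pr n)) (M : Matrix (Fin n) (Fin n) F) : Prop :=
  ∀ i j : Fin n, (i, j) ∉ J → M i j = 0

lemma SuppJ.add {J : Finset (Pr n)} {A B : Matrix (Fin n) (Fin n) F}
    (hA : SuppJ J A) (hB : SuppJ J B) : SuppJ J (A + B) := fun i j h => by
  simp [Matrix.add_apply, hA i j h, hB i j h]

lemma SuppJ.neg {J : Finset (Pr n)} {A : Matrix (Fin n) (Fin n) F}
    (hA : SuppJ J A) : SuppJ J (-A) := fun i j h => by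
  simp [hA i j h]

lemma SuppJ.mul {J : Finset (Pr n)} (hJ : Closed J) {A B : Matrix (Fin n) (Fin n) F}
    (hA : SuppJ J A) (hB : SuppJ J B) : SuppJ J (A * B) := by
  intro i j h
  rw [Matrix.mul_apply]
  refine Finset.sum_eq_zero fun k _ => ?_
  by_cases h1 : (i, k) ∈ J
  · by_cases h2 : (k, j) ∈ J
    · exact absurd (hJ.2 i k j h1 h2) h
    · rw [hB k j h2, mul_zero]
  · rw [hA i k h1, zero_mul]

lemma SuppJ.pow {J : Finset (Pr n)} (hJ : Closed J) {A : Matrix (Fin n) (Fin n) F}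
    (hA : SuppJ J A) : ∀ k, k ≠ 0 → SuppJ J (A ^ k) := by
  intro k
  induction k with
  | zero => intro h; exact absurd rfl h
  | succ m ih =>
    intro _
    cases m with
    | zero => simpa using hA
    | succ l =>
      rw [pow_succ]
      exact SuppJ.mul hJ (ih (Nat.succ_ne_zero l)) hA

lemma SuppJ.pow_apply_ne_zero {J : Finset (Pr n)} (hJ : Closed J)
    {A : Matrix (Fin n) (Fin n) F} (hA : SuppJ J A) :
    ∀ (k : ℕ) (i j : Fin n), (A ^ k) i j ≠ 0 → (i : ℕ) + k ≤ (j : ℕ) := by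
  intro k
  induction k with
  | zero =>
    intro i j h
    rw [pow_zero] at h
    have hij : i = j := by
      by_contra hne
      exact h (Matrix.one_apply_ne hne)
    simp [hij]
  | succ m ih =>
    intro i j h
    rw [pow_succ, Matrix.mul_apply] at h
    obtain ⟨m', _, hm'⟩ := Finset.exists_ne_zero_of_sum_ne_zero h
    have h1 : (A ^ m) i m' ≠ 0 := left_ne_zero_of_mul hm'
    have h2 : A m' j ≠ 0 := right_ne_zero_of_mul hm'
    have hmem : (m', j) ∈ J := by
      by_contra hmem
      exact h2 (hA m' j hmem)
    have hlt : (m' : ℕ) < (j : ℕ) := hJ.1 (m', j) hmem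
    have := ih i m' h1
    omega

lemma SuppJ.pow_card {J : Finset (Pr n)} (hJ : Closed J) {A : Matrix (Fin n) (Fin n) F}
    (hA : SuppJ J A) : A ^ n = 0 := by
  ext i j
  simp only [Matrix.zero_apply]
  by_contra h
  have h1 := SuppJ.pow_apply_ne_zero hJ hA n i j h
  have h2 : (j : ℕ) < n := j.isLt
  omega

lemma geom_inv {J : Finset (Pr n)} (hJ : Closed J) {A : Matrix (Fin n) (Fin n) F}
    (hA : SuppJ J A) :
    (1 + A) * (∑ k ∈ Finset.range (n + 1), (-A) ^ k) = 1 ∧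
    (∑ k ∈ Finset.range (n + 1), (-A) ^ k) * (1 + A) = 1 ∧
    SuppJ J ((∑ k ∈ Finset.range (n + 1), (-A) ^ k) - 1) := by
  have hAn : (-A) ^ (n + 1) = 0 := by
    have h0 : A ^ n = 0 := hA.pow_card hJ
    have h1 : A ^ (n + 1) = 0 := by rw [pow_succ, h0, zero_mul]
    rw [neg_pow, h1, mul_zero]
  have hsub : (-A) - 1 = -(1 + A) := by noncomm_ring
  refine ⟨?_, ?_, ?_⟩
  · have := mul_geom_sum (-A) (n + 1)
    rw [hAn, hsub, zero_sub, neg_mul, neg_inj] at this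
    exact this
  · have := geom_sum_mul (-A) (n + 1)
    rw [hAn, hsub, zero_sub, mul_neg, neg_inj] at this
    exact this
  · intro i j h
    have hsum : (∑ k ∈ Finset.range (n + 1), (-A) ^ k) i j = ((-A) ^ 0) i j := by
      rw [Matrix.sum_apply]
      exact Finset.sum_eq_single_of_mem 0 (Finset.mem_range.mpr (Nat.succ_pos n))
        (fun k _ hk => SuppJ.pow hJ hA.neg k hk i j h)
    rw [Matrix.sub_apply, hsum, pow_zero, sub_self]

lemma mem_UJ_of {J : Finset (Pr n)} (hJ : Closed J) {A : Matrix (Fin n) (Fin n) F}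
    (hA : SuppJ J A) : (1 : Matrix (Fin n) (Fin n) F) + A ∈ UJ J := by
  constructor
  · intro i
    have hne : (i, i) ∉ J := fun hm => lt_irrefl i (hJ.1 _ hm)
    simp [Matrix.add_apply, hA i i hne]
  · intro i j hij hm
    simp [Matrix.add_apply, hA i j hm, Matrix.one_apply_ne hij]

lemma suppJ_of_mem_UJ {J : Finset (Pr n)} {M : Matrix (Fin n) (Fin n) F}
    (hM : M ∈ UJ J) : SuppJ J (M - 1) := by
  intro i j h
  by_cases hij : i = j
  · subst hij; simp [Matrix.sub_apply, hM.1 i]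
  · simp [Matrix.sub_apply, hM.2 i j hij h, Matrix.one_apply_ne hij]

lemma UJ_mul {J : Finset (Pr n)} (hJ : Closed J) {M N : Matrix (Fin n) (Fin n) F}
    (hM : M ∈ UJ J) (hN : N ∈ UJ J) : M * N ∈ UJ J := by
  have hA := suppJ_of_mem_UJ hM
  have hB := suppJ_of_mem_UJ hN
  have key : M * N = 1 + ((M - 1) + (N - 1) + (M - 1) * (N - 1)) := by noncomm_ring
  rw [key]
  exact mem_UJ_of hJ ((hA.add hB).add (SuppJ.mul hJ hA hB))

set_option linter.unusedSectionVars true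

theorem stmt13 {F : Type*} [Field F] [Fintype F] [DecidableEq F] {n : ℕ}
    (J : Finset (Pr n)) (hJ : Closed J) (φ : Pr n → F)
    (h4 : ¬ ∃ i j k l : Fin n,
      (i, j) ∈ J ∧ (j, k) ∈ J ∧ (k, l) ∈ J ∧ φ (i, j) ≠ 0 ∧ φ (k, l) ≠ 0) :
    (fun Y => 1 + Y) '' biOrbit J φ =
      {M : Matrix (Fin n) (Fin n) F | ∃ g h : Matrix (Fin n) (Fin n) F,
        g ∈ UJ J ∧ h ∈ UJ J ∧ g * h = 1 ∧ M = g * xmat J φ * h} := by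
  classical
  have hxmat : xmat J φ = 1 + Xmat (F := F) J φ := rfl
  ext M
  simp only [Set.mem_image, Set.mem_setOf_eq, biOrbit]
  constructor
  · rintro ⟨Y, ⟨u, v, hu, hv, rfl⟩, rfl⟩
    set X : Matrix (Fin n) (Fin n) F := Xmat J φ with hXdef
    have hXme : ∀ i j : Fin n, X i j ≠ 0 → (i, j) ∈ J ∧ φ (i, j) ≠ 0 := by
      intro i j h
      by_cases hm : (i, j) ∈ J
      · refine ⟨hm, fun h0 => h ?_⟩
        simp [hXdef, Xmat, hm, h0]
      · exact absurd (by simp [hXdef, Xmat, hm]) h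
    have hA : SuppJ J (u - 1) := suppJ_of_mem_UJ hu
    set W : Matrix (Fin n) (Fin n) F := v * u - 1 with hWdef
    have hW : SuppJ J W := by
      have e : W = (v - 1) + (u - 1) + (v - 1) * (u - 1) := by rw [hWdef]; noncomm_ring
      rw [e]
      exact ((suppJ_of_mem_UJ hv).add hA).add (SuppJ.mul hJ (suppJ_of_mem_UJ hv) hA)
    set W₁ : Matrix (Fin n) (Fin n) F :=
      Matrix.of (fun i j => if ∃ p ∈ J, p.2 = i ∧ φ p ≠ 0 then W i j else 0) with hW₁def
    have hW₁ : SuppJ J W₁ := by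
      intro i j h
      rw [hW₁def]
      simp only [Matrix.of_apply]
      split
      · exact hW i j h
      · rfl
    have hXW : X * W₁ = X * W := by
      ext i j
      rw [Matrix.mul_apply, Matrix.mul_apply]
      refine Finset.sum_congr rfl fun k _ => ?_
      by_cases he : ∃ p ∈ J, p.2 = k ∧ φ p ≠ 0
      · rw [hW₁def]
        simp only [Matrix.of_apply, if_pos he]
      · have hx : X i k = 0 := by
          by_contra hx
          obtain ⟨hm, hφ⟩ := hXme i k hx
          exact he ⟨(i, k), hm, rfl, hφ⟩
        simp [hx]
    have hW₁X : W₁ * X = 0 := by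
      ext i j
      simp only [Matrix.mul_apply, Matrix.zero_apply]
      refine Finset.sum_eq_zero fun k _ => ?_
      by_cases he : ∃ p ∈ J, p.2 = i ∧ φ p ≠ 0
      · by_cases hx : X k j = 0
        · rw [hx, mul_zero]
        · obtain ⟨⟨p1, p2⟩, hp, hp2, hpφ⟩ := he
          simp only at hp2
          subst hp2
          obtain ⟨hkj, hφkj⟩ := hXme k j hx
          by_cases hik : (p2, k) ∈ J
          · exact absurd ⟨p1, p2, k, j, hp, hik, hkj, hpφ, hφkj⟩ h4
          · rw [hW₁ p2 k hik, zero_mul]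
      · have hz : W₁ i k = 0 := by
          rw [hW₁def]
          simp only [Matrix.of_apply]
          exact if_neg he
        rw [hz, zero_mul]
    obtain ⟨hzP, hPz, hPsupp⟩ := geom_inv hJ hW₁
    set P : Matrix (Fin n) (Fin n) F := ∑ k ∈ Finset.range (n + 1), (-W₁) ^ k with hPdef
    obtain ⟨huinv1, huinv2, huinvsupp⟩ := geom_inv hJ hA
    set uinv : Matrix (Fin n) (Fin n) F := ∑ k ∈ Finset.range (n + 1), (-(u - 1)) ^ k
      with huinvdef
    have hu1 : (1 : Matrix (Fin n) (Fin n) F) + (u - 1) = u := by noncomm_ring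
    rw [hu1] at huinv1 huinv2
    have hPX : P * X = X := by
      rw [hPdef, Finset.sum_mul]
      have hterm : ∀ k ∈ Finset.range (n + 1), k ≠ 0 → (-W₁) ^ k * X = 0 := by
        intro k _ hk
        obtain ⟨m, rfl⟩ := Nat.exists_eq_succ_of_ne_zero hk
        rw [pow_succ, mul_assoc, neg_mul, hW₁X, neg_zero, mul_zero]
      rw [Finset.sum_eq_single_of_mem 0 (Finset.mem_range.mpr (Nat.succ_pos n)) hterm]
      rw [pow_zero, one_mul]
    have key : P * (1 + X) * (1 + W₁) = 1 + X * (v * u) := by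
      have e1 : P * (1 + X) * (1 + W₁) = P * (1 + W₁) + P * X * (1 + W₁) := by noncomm_ring
      rw [e1, hPz, hPX]
      have e2 : X * (1 + W₁) = X + X * W₁ := by noncomm_ring
      rw [e2, hXW]
      have e3 : X * W = X * (v * u) - X := by rw [hWdef]; noncomm_ring
      rw [e3]
      abel
    have hPmem : P ∈ UJ J := by
      have e : P = 1 + (P - 1) := by noncomm_ring
      rw [e]; exact mem_UJ_of hJ hPsupp
    have huinvmem : uinv ∈ UJ J := by
      have e : uinv = 1 + (uinv - 1) := by noncomm_ring
      rw [e]; exact mem_UJ_of hJ huinvsupp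
    refine ⟨u * P, (1 + W₁) * uinv, UJ_mul hJ hu hPmem,
      UJ_mul hJ (mem_UJ_of hJ hW₁) huinvmem, ?_, ?_⟩
    · calc u * P * ((1 + W₁) * uinv) = u * (P * (1 + W₁)) * uinv := by noncomm_ring
        _ = u * uinv := by rw [hPz]; noncomm_ring
        _ = 1 := huinv1
    · rw [hxmat]
      calc (1 : Matrix (Fin n) (Fin n) F) + u * X * v
          = u * uinv + u * X * v * (u * uinv) := by rw [huinv1]; noncomm_ring
        _ = u * (1 + X * (v * u)) * uinv := by noncomm_ring
        _ = u * (P * (1 + X) * (1 + W₁)) * uinv := by rw [key]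
        _ = u * P * (1 + X) * ((1 + W₁) * uinv) := by noncomm_ring
  · rintro ⟨g, h, hg, hh, hgh, rfl⟩
    refine ⟨g * Xmat J φ * h, ⟨g, h, hg, hh, rfl⟩, ?_⟩
    show (1 : Matrix (Fin n) (Fin n) F) + g * Xmat J φ * h = g * xmat J φ * h
    have e : g * xmat J φ * h = g * h + g * Xmat J φ * h := by rw [hxmat]; noncomm_ring
    rw [e, hgh]


end SCT
end

section
/- Let J be closed and suppose the poset 𝒫 determined by J contains no 4-chain (i,j,k,l). Then every superclass of U_J is a single conjugacy class, and every supercharacter χ^η (η ∈ J*) is an irreducible complex character of U_J. -/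
open Matrix BigOperators

namespace SCT

variable {F : Type*} [Field F] [Fintype F] [DecidableEq F] {n : ℕ}

/-! ### Auxiliary material for Statement 15 -/

section Stmt15Aux
set_option linter.unusedSectionVars false
set_option linter.unusedVariables false

variable {F : Type*} [Field F] [Fintype F] [DecidableEq F] {n : ℕ}

/-- Subtype-indexed version of `Xmat`. -/
def XS (J : Finset (Pr n)) (a : {p // p ∈ J} → F) : Matrix (Fin n) (Fin n) F :=
  Matrix.of fun i j => if h : (i, j) ∈ J then a ⟨(i, j), h⟩ else 0

/-- Coordinates of a matrix along `J`. -/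
def cdJ (J : Finset (Pr n)) (A : Matrix (Fin n) (Fin n) F) : {p // p ∈ J} → F :=
  fun p => A p.1.1 p.1.2

variable {J : Finset (Pr n)}

lemma XS_apply (a : {p // p ∈ J} → F) (i j : Fin n) :
    XS J a i j = if h : (i, j) ∈ J then a ⟨(i, j), h⟩ else 0 := rfl

lemma Xmat_eq_XS (φ : Pr n → F) : Xmat J φ = XS J (fun p => φ p.1) := by
  ext i j
  simp only [Xmat, XS, Matrix.of_apply]
  split_ifs <;> simp_all

lemma XS_mem_nJset (a : {p // p ∈ J} → F) : XS J a ∈ nJset J := by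
  intro i j hij
  simp [XS_apply, hij]

lemma cdJ_XS (a : {p // p ∈ J} → F) : cdJ J (XS J a) = a := by
  funext p
  simp [cdJ, XS_apply, p.2]

lemma diag_not_mem (hJ : Closed J) (i : Fin n) : (i, i) ∉ J := by
  intro h
  exact absurd (hJ.1 _ h) (lt_irrefl i)

lemma nJset_eq_zero_of_not_mem {X : Matrix (Fin n) (Fin n) F} (hX : X ∈ nJset J)
    {i j : Fin n} (h : (i, j) ∉ J) : X i j = 0 := hX i j h

lemma XS_cdJ {X : Matrix (Fin n) (Fin n) F} (hX : X ∈ nJset J) : XS J (cdJ J X) = X := by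
  ext i j
  simp only [XS_apply, cdJ]
  split_ifs with h
  · rfl
  · exact (hX i j h).symm

lemma nJset_add {X Y : Matrix (Fin n) (Fin n) F} (hX : X ∈ nJset J) (hY : Y ∈ nJset J) :
    X + Y ∈ nJset J := fun i j h => by
  simp [Matrix.add_apply, hX i j h, hY i j h]

lemma nJset_neg {X : Matrix (Fin n) (Fin n) F} (hX : X ∈ nJset J) : -X ∈ nJset J :=
  fun i j h => by simp [Matrix.neg_apply, hX i j h]

lemma nJset_mul (hJ : Closed J) {X Y : Matrix (Fin n) (Fin n) F}
    (hX : X ∈ nJset J) (hY : Y ∈ nJset J) : X * Y ∈ nJset J := by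
  intro i k h
  rw [Matrix.mul_apply]
  refine Finset.sum_eq_zero fun j _ => ?_
  by_cases h1 : (i, j) ∈ J
  · by_cases h2 : (j, k) ∈ J
    · exact absurd (hJ.2 i j k h1 h2) h
    · rw [hY j k h2, mul_zero]
  · rw [hX i j h1, zero_mul]

/-- products of two `J`-supported matrices where on every composable pair of arcs one of
the factors vanishes are zero -/
lemma mul_eq_zero_of_chain {X Y : Matrix (Fin n) (Fin n) F}
    (hX : X ∈ nJset J) (hY : Y ∈ nJset J)
    (h : ∀ i j k : Fin n, (i, j) ∈ J → (j, k) ∈ J → X i j = 0 ∨ Y j k = 0) :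
    X * Y = 0 := by
  ext i k
  rw [Matrix.mul_apply]
  refine Finset.sum_eq_zero fun j _ => ?_
  by_cases h1 : (i, j) ∈ J
  · by_cases h2 : (j, k) ∈ J
    · rcases h i j k h1 h2 with h' | h' <;> simp [h']
    · rw [hY j k h2, mul_zero]
  · rw [hX i j h1, zero_mul]

lemma triple_zero (h4 : ¬ ∃ i j k l : Fin n, (i, j) ∈ J ∧ (j, k) ∈ J ∧ (k, l) ∈ J)
    {X Y Z : Matrix (Fin n) (Fin n) F} (hX : X ∈ nJset J) (hY : Y ∈ nJset J)
    (hZ : Z ∈ nJset J) : X * Y * Z = 0 := by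
  ext i l
  rw [Matrix.mul_apply]
  refine Finset.sum_eq_zero fun k _ => ?_
  by_cases h2 : (k, l) ∈ J
  · rw [Matrix.mul_apply]
    rw [Finset.sum_mul]
    refine Finset.sum_eq_zero fun j _ => ?_
    by_cases ha : (i, j) ∈ J
    · by_cases hb : (j, k) ∈ J
      · exact absurd ⟨i, j, k, l, ha, hb, h2⟩ h4
      · rw [hY j k hb, mul_zero, zero_mul]
    · rw [hX i j ha, zero_mul, zero_mul]
  · rw [hZ k l h2, mul_zero]

lemma one_add_mem_UJ (hJ : Closed J) {Z : Matrix (Fin n) (Fin n) F} (hZ : Z ∈ nJset J) :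
    (1 + Z) ∈ UJ J := by
  constructor
  · intro i
    rw [Matrix.add_apply, Matrix.one_apply_eq, hZ i i (diag_not_mem hJ i), add_zero]
  · intro i j hne h
    rw [Matrix.add_apply, Matrix.one_apply_ne hne, hZ i j h, add_zero]

lemma UJ_eq_one_add (hJ : Closed J) {u : Matrix (Fin n) (Fin n) F} (hu : u ∈ UJ J) :
    u = 1 + XS J (cdJ J u) := by
  ext i j
  rw [Matrix.add_apply, XS_apply]
  by_cases hij : (i, j) ∈ J
  · have hne : i ≠ j := fun h => diag_not_mem hJ i (h ▸ hij)
    rw [dif_pos hij, Matrix.one_apply_ne hne, zero_add]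
    rfl
  · rw [dif_neg hij, add_zero]
    by_cases hne : i = j
    · subst hne; rw [Matrix.one_apply_eq, hu.1 i]
    · rw [Matrix.one_apply_ne hne, hu.2 i j hne hij]

lemma sub_one_mem_nJset (hJ : Closed J) {u : Matrix (Fin n) (Fin n) F} (hu : u ∈ UJ J) :
    u - 1 ∈ nJset J := by
  intro i j h
  by_cases hne : i = j
  · subst hne; simp [Matrix.sub_apply, hu.1 i]
  · simp [Matrix.sub_apply, hu.2 i j hne h, Matrix.one_apply_ne hne]

end Stmt15Aux
section Stmt15Part1
set_option linter.unusedSectionVars false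
set_option linter.unusedVariables false

variable {F : Type*} [Field F] [Fintype F] [DecidableEq F] {n : ℕ}
variable {J : Finset (Pr n)}

theorem stmt15_part1 (hJ : Closed J)
    (h4 : ¬ ∃ i j k l : Fin n, (i, j) ∈ J ∧ (j, k) ∈ J ∧ (k, l) ∈ J) (φ : Pr n → F) :
    (fun Y => 1 + Y) '' biOrbit J φ =
      {M : Matrix (Fin n) (Fin n) F | ∃ g h : Matrix (Fin n) (Fin n) F,
        g ∈ UJ J ∧ h ∈ UJ J ∧ g * h = 1 ∧ M = g * xmat J φ * h} := by
  have hXφ : Xmat J φ ∈ nJset J := by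
    rw [Xmat_eq_XS]; exact XS_mem_nJset _
  set X := Xmat J φ with hXdef
  ext M
  constructor
  · rintro ⟨Y, ⟨u, v, hu, hv, rfl⟩, rfl⟩
    set A := XS J (cdJ J u) with hA
    set B := XS J (cdJ J v) with hB
    have hAn : A ∈ nJset J := XS_mem_nJset _
    have hBn : B ∈ nJset J := XS_mem_nJset _
    have hu' : u = 1 + A := UJ_eq_one_add hJ hu
    have hv' : v = 1 + B := UJ_eq_one_add hJ hv
    set src : Fin n → Prop := fun j => ∀ i, (i, j) ∉ J with hsrc
    have : DecidablePred src := fun j => by rw [hsrc]; infer_instance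
    set AS : Matrix (Fin n) (Fin n) F := Matrix.of (fun i j => if src i then A i j else 0)
      with hAS
    set BT : Matrix (Fin n) (Fin n) F := Matrix.of (fun i j => if src i then 0 else B i j)
      with hBT
    have hASn : AS ∈ nJset J := fun i j h => by
      simp only [hAS, Matrix.of_apply]; rw [hAn i j h]; simp
    have hBTn : BT ∈ nJset J := fun i j h => by
      simp only [hBT, Matrix.of_apply]; rw [hBn i j h]; simp
    set C : Matrix (Fin n) (Fin n) F := AS - BT with hC
    have hCn : C ∈ nJset J := by
      rw [hC, sub_eq_add_neg]; exact nJset_add hASn (nJset_neg hBTn)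
    -- the key product identities
    have hCX : C * X = A * X := by
      rw [hC, sub_mul]
      have h1 : BT * X = 0 := by
        refine mul_eq_zero_of_chain hBTn hXφ fun i j k hij hjk => ?_
        left
        simp only [hBT, Matrix.of_apply]
        by_cases hs : src i
        · rw [if_pos hs]
        · exfalso
          simp only [hsrc, not_forall, not_not] at hs
          obtain ⟨i', hi'⟩ := hs
          exact h4 ⟨i', i, j, k, hi', hij, hjk⟩
      have h2 : (A - AS) * X = 0 := by
        refine mul_eq_zero_of_chain (by
          rw [sub_eq_add_neg]; exact nJset_add hAn (nJset_neg hASn)) hXφ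
          fun i j k hij hjk => ?_
        left
        simp only [Matrix.sub_apply, hAS, Matrix.of_apply]
        by_cases hs : src i
        · rw [if_pos hs, sub_self]
        · exfalso
          simp only [hsrc, not_forall, not_not] at hs
          obtain ⟨i', hi'⟩ := hs
          exact h4 ⟨i', i, j, k, hi', hij, hjk⟩
      have h3 : AS * X = A * X := by
        have h5 := sub_mul A AS X
        rw [h2] at h5
        exact (sub_eq_zero.mp h5.symm).symm
      rw [h1, sub_zero, h3]
    have hXC : X * C = -(X * B) := by
      rw [hC, mul_sub]
      have h1 : X * AS = 0 := by
        refine mul_eq_zero_of_chain hXφ hASn fun i j k hij hjk => ?_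
        right
        simp only [hAS, Matrix.of_apply]
        rw [if_neg]
        intro hs
        exact hs i hij
      have h2 : X * (B - BT) = 0 := by
        refine mul_eq_zero_of_chain hXφ (by
          rw [sub_eq_add_neg]; exact nJset_add hBn (nJset_neg hBTn))
          fun i j k hij hjk => ?_
        right
        simp only [Matrix.sub_apply, hBT, Matrix.of_apply]
        rw [if_neg, sub_self]
        intro hs
        exact hs i hij
      have h3 : X * BT = X * B := by
        have h5 := mul_sub X B BT
        rw [h2] at h5
        exact (sub_eq_zero.mp h5.symm).symm
      rw [h1, zero_sub, h3]
    have hgh : (1 + C) * (1 + (-C + C * C)) = 1 := by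
      have e : (1 + C) * (1 + (-C + C * C)) = 1 + C * C * C := by noncomm_ring
      rw [e, triple_zero h4 hCn hCn hCn, add_zero]
    refine ⟨1 + C, 1 + (-C + C * C), one_add_mem_UJ hJ hCn,
      one_add_mem_UJ hJ (nJset_add (nJset_neg hCn) (nJset_mul hJ hCn hCn)), hgh, ?_⟩
    have t1 : X * (C * C) = 0 := by
      rw [← mul_assoc]; exact triple_zero h4 hXφ hCn hCn
    have t2 : C * X * C = 0 := triple_zero h4 hCn hXφ hCn
    have t3 : C * X * (C * C) = 0 := by
      rw [← mul_assoc, t2, zero_mul]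
    have key : (1 + C) * X * (1 + (-C + C * C)) =
        X + C * X - X * C + X * (C * C) - C * X * C + C * X * (C * C) := by noncomm_ring
    have keyuv : u * X * v = X + A * X + X * B + A * X * B := by
      rw [hu', hv']; noncomm_ring
    have hAXB : A * X * B = 0 := triple_zero h4 hAn hXφ hBn
    have final : (1 + C) * xmat J φ * (1 + (-C + C * C)) = 1 + u * X * v := by
      have e2 : (1 + C) * xmat J φ * (1 + (-C + C * C)) =
          (1 + C) * (1 + (-C + C * C)) + (1 + C) * X * (1 + (-C + C * C)) := by
        rw [xmat, ← hXdef]; noncomm_ring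
      rw [e2, hgh, key, t1, t2, t3, keyuv, hAXB, hCX, hXC]
      noncomm_ring
    exact final.symm
  · rintro ⟨g, h, hg, hh, hgh, rfl⟩
    refine ⟨g * X * h, ⟨g, h, hg, hh, rfl⟩, ?_⟩
    have e : g * xmat J φ * h = g * h + g * X * h := by
      rw [xmat, ← hXdef]; noncomm_ring
    rw [e, hgh]

end Stmt15Part1
section Stmt15Sums
set_option linter.unusedSectionVars false
set_option linter.unusedVariables false

variable {F : Type*} [Field F] [Fintype F] [DecidableEq F] {n : ℕ}
variable {J : Finset (Pr n)}

/-- The linear functional `ℓ_η` on coordinates. -/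
def ell (J : Finset (Pr n)) (η : Pr n → F) (a : {p // p ∈ J} → F) : F :=
  ∑ p : {p // p ∈ J}, η p.1 * a p

lemma sum_J' {β : Type*} [AddCommMonoid β] (f : {p // p ∈ J} → β) :
    ∑ q : {p // p ∈ J}, f q = ∑ y : Pr n, (if h : y ∈ J then f ⟨y, h⟩ else 0) := by
  have h1 : ∀ q : {p // p ∈ J}, f q =
      (fun y => if h : y ∈ J then f ⟨y, h⟩ else 0) (q : Pr n) := by
    intro q
    simp [q.2]
  rw [Finset.sum_congr rfl fun q _ => h1 q, Finset.sum_coe_sort J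
    (fun y => if h : y ∈ J then f ⟨y, h⟩ else 0)]
  refine Finset.sum_subset (Finset.subset_univ J) fun y _ hy => ?_
  rw [dif_neg hy]

lemma lam_XS (η : Pr n → F) (a : {p // p ∈ J} → F) :
    lam J η (XS J a) = ell J η a := by
  rw [ell, sum_J' (J := J) (fun p => η p.1 * a p), lam]
  have step : (∑ p ∈ J, η p * (XS J a) p.1 p.2) =
      ∑ y : Pr n, (if y ∈ J then η y * (XS J a) y.1 y.2 else 0) := by
    rw [Finset.sum_ite_mem, Finset.univ_inter]
  rw [step]
  refine Finset.sum_congr rfl fun y _ => ?_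
  by_cases h : y ∈ J
  · rw [if_pos h, dif_pos h]
    simp [XS_apply, h]
  · rw [if_neg h, dif_neg h]

lemma lam_add (η : Pr n → F) (P Q : Matrix (Fin n) (Fin n) F) :
    lam J η (P + Q) = lam J η P + lam J η Q := by
  rw [lam, lam, lam, ← Finset.sum_add_distrib]
  exact Finset.sum_congr rfl fun p _ => by rw [Matrix.add_apply, mul_add]

lemma lam_smul (η : Pr n → F) (c : F) (P : Matrix (Fin n) (Fin n) F) :
    lam J η (c • P) = c * lam J η P := by
  rw [lam, lam, Finset.mul_sum]
  exact Finset.sum_congr rfl fun p _ => by rw [Matrix.smul_apply, smul_eq_mul]; ring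

lemma metaL_apply (η : Pr n → F) (p q : {p // p ∈ J}) :
    MetaL J η p q =
      if (q : Pr n).2 = (p : Pr n).1 then η ((q : Pr n).1, (p : Pr n).2) else 0 := by
  simp only [MetaL, Matrix.of_apply]
  by_cases h : (q : Pr n).2 = (p : Pr n).1
  · rw [if_pos h, if_pos]
    refine ⟨h, ?_, ?_⟩
    · have hq := q.2
      rw [← h]
      exact hq
    · exact p.2
  · rw [if_neg h, if_neg]
    rintro ⟨h1, -⟩
    exact h h1

/-- The master triple sum identity. -/
lemma dot_mulVec_metaL (η : Pr n → F) (a b : {p // p ∈ J} → F) :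
    b ⬝ᵥ (MetaL J η).mulVec a =
      ∑ i : Fin n, ∑ j : Fin n, ∑ k : Fin n, XS J a i j * XS J b j k * η (i, k) := by
  rw [dotProduct]
  have e1 : ∀ p : {p // p ∈ J}, b p * (MetaL J η).mulVec a p =
      ∑ q : {p // p ∈ J}, (if (q : Pr n).2 = (p : Pr n).1 then
        a q * b p * η ((q : Pr n).1, (p : Pr n).2) else 0) := by
    intro p
    rw [Matrix.mulVec, dotProduct, Finset.mul_sum]
    refine Finset.sum_congr rfl fun q _ => ?_
    rw [metaL_apply]
    split_ifs with h
    · ring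
    · ring
  rw [Finset.sum_congr rfl fun p _ => e1 p]
  rw [sum_J' (J := J) _]
  have e2 : ∀ y : Pr n, (if h : y ∈ J then
        ∑ q : {p // p ∈ J}, (if (q : Pr n).2 = y.1 then a q * b ⟨y, h⟩ * η ((q : Pr n).1, y.2)
          else 0) else 0) =
      ∑ z : Pr n, (if hz : z ∈ J then (if hy : y ∈ J then
        (if z.2 = y.1 then a ⟨z, hz⟩ * b ⟨y, hy⟩ * η (z.1, y.2) else 0) else 0) else 0) := by
    intro y
    by_cases h : y ∈ J
    · rw [dif_pos h, sum_J' (J := J) _]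
      refine Finset.sum_congr rfl fun z _ => ?_
      by_cases hz : z ∈ J
      · rw [dif_pos hz, dif_pos hz, dif_pos h]
      · rw [dif_neg hz, dif_neg hz]
    · rw [dif_neg h]
      refine (Finset.sum_eq_zero fun z _ => ?_).symm
      by_cases hz : z ∈ J
      · rw [dif_pos hz, dif_neg h]
      · rw [dif_neg hz]
  rw [Finset.sum_congr rfl fun y _ => e2 y]
  -- now both sides are sums over pairs of pairs / triples of plain indices
  conv_lhs => rw [Finset.sum_comm]
  conv_lhs => rw [Fintype.sum_prod_type]
  refine Finset.sum_congr rfl fun i _ => ?_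
  refine Finset.sum_congr rfl fun j _ => ?_
  conv_lhs => rw [Fintype.sum_prod_type]
  have e3 : ∀ j' : Fin n, ∀ k : Fin n,
      (if hz : (i, j) ∈ J then (if hy : (j', k) ∈ J then
        (if j = j' then a ⟨(i, j), hz⟩ * b ⟨(j', k), hy⟩ * η (i, k) else 0) else 0) else 0) =
      (if j = j' then XS J a i j * XS J b j' k * η (i, k) else 0) := by
    intro j' k
    by_cases hjj : j = j'
    · subst hjj
      by_cases hz : (i, j) ∈ J
      · by_cases hy : (j, k) ∈ J
        · simp [XS_apply, hz, hy]
        · simp [XS_apply, hz, hy]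
      · simp [XS_apply, hz]
    · simp [hjj]
  calc ∑ j' : Fin n, ∑ k : Fin n, (if hz : (i, j) ∈ J then (if hy : (j', k) ∈ J then
        (if j = j' then a ⟨(i, j), hz⟩ * b ⟨(j', k), hy⟩ * η (i, k) else 0) else 0) else 0)
      = ∑ j' : Fin n, ∑ k : Fin n, (if j = j' then XS J a i j * XS J b j' k * η (i, k) else 0) := by
        exact Finset.sum_congr rfl fun j' _ => Finset.sum_congr rfl fun k _ => e3 j' k
    _ = ∑ j' : Fin n, (if j = j' then ∑ k : Fin n, XS J a i j * XS J b j' k * η (i, k) else 0) := by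
        refine Finset.sum_congr rfl fun j' _ => ?_
        split_ifs with h
        · rfl
        · exact Finset.sum_const_zero
    _ = ∑ k : Fin n, XS J a i j * XS J b j k * η (i, k) := by
        rw [Finset.sum_ite_eq]
        simp

/-- `λ_η(X_a X_b)` in matrix form. -/
lemma lam_mul_eq_dot (hJ : Closed J) (η : Pr n → F) (a b : {p // p ∈ J} → F) :
    lam J η (XS J a * XS J b) = b ⬝ᵥ (MetaL J η).mulVec a := by
  rw [dot_mulVec_metaL, lam]
  have step1 : (∑ p ∈ J, η p * (XS J a * XS J b) p.1 p.2) =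
      ∑ y : Pr n, (if y ∈ J then η y * (XS J a * XS J b) y.1 y.2 else 0) := by
    rw [Finset.sum_ite_mem, Finset.univ_inter]
  rw [step1, Fintype.sum_prod_type]
  refine Finset.sum_congr rfl fun i _ => ?_
  rw [Finset.sum_comm]
  refine Finset.sum_congr rfl fun k _ => ?_
  rw [Matrix.mul_apply]
  by_cases hik : (i, k) ∈ J
  · rw [if_pos hik, Finset.mul_sum]
    exact Finset.sum_congr rfl fun j _ => by ring
  · rw [if_neg hik]
    refine (Finset.sum_eq_zero fun j _ => ?_).symm
    by_cases h1 : (i, j) ∈ J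
    · by_cases h2 : (j, k) ∈ J
      · exact absurd (hJ.2 i j k h1 h2) hik
      · rw [XS_apply (J := J) b j k, dif_neg h2]
        ring
    · rw [XS_apply (J := J) a, dif_neg h1]
      ring

end Stmt15Sums
section Stmt15Char
set_option linter.unusedSectionVars false
set_option linter.unusedVariables false

variable {F : Type*} [Field F] [Fintype F] [DecidableEq F] {n : ℕ}
variable {J : Finset (Pr n)}

/-- triple-product vanishing, `M_L`-column form. -/
lemma mulVec_metaL_prod (h4 : ¬ ∃ i j k l : Fin n, (i, j) ∈ J ∧ (j, k) ∈ J ∧ (k, l) ∈ J)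
    (η : Pr n → F) (a b : {p // p ∈ J} → F) :
    (MetaL J η).mulVec (cdJ J (XS J a * XS J b)) = 0 := by
  funext p
  rw [Matrix.mulVec, dotProduct, Pi.zero_apply]
  refine Finset.sum_eq_zero fun q _ => ?_
  rw [metaL_apply]
  split_ifs with h
  · have hm : cdJ J (XS J a * XS J b) q = 0 := by
      rw [cdJ, Matrix.mul_apply]
      refine Finset.sum_eq_zero fun t _ => ?_
      by_cases h1 : ((q : Pr n).1, t) ∈ J
      · by_cases h2 : (t, (q : Pr n).2) ∈ J
        · exfalso
          refine h4 ⟨(q : Pr n).1, t, (q : Pr n).2, (p : Pr n).2, h1, h2, ?_⟩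
          rw [h]
          exact p.2
        · rw [XS_apply (J := J) b, dif_neg h2, mul_zero]
      · rw [XS_apply (J := J) a, dif_neg h1, zero_mul]
    rw [hm, mul_zero]
  · rw [zero_mul]

/-- triple-product vanishing, `M_L`-row form. -/
lemma vecMul_prod_metaL (h4 : ¬ ∃ i j k l : Fin n, (i, j) ∈ J ∧ (j, k) ∈ J ∧ (k, l) ∈ J)
    (η : Pr n → F) (a b : {p // p ∈ J} → F) :
    Matrix.vecMul (cdJ J (XS J a * XS J b)) (MetaL J η) = 0 := by
  funext q
  rw [Matrix.vecMul, dotProduct, Pi.zero_apply]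
  refine Finset.sum_eq_zero fun p _ => ?_
  rw [metaL_apply]
  split_ifs with h
  · have hm : cdJ J (XS J a * XS J b) p = 0 := by
      rw [cdJ, Matrix.mul_apply]
      refine Finset.sum_eq_zero fun t _ => ?_
      by_cases h1 : ((p : Pr n).1, t) ∈ J
      · by_cases h2 : (t, (p : Pr n).2) ∈ J
        · exfalso
          refine h4 ⟨(q : Pr n).1, (q : Pr n).2, t, (p : Pr n).2, q.2, ?_, h2⟩
          rw [h]
          exact h1
        · rw [XS_apply (J := J) b, dif_neg h2, mul_zero]
      · rw [XS_apply (J := J) a, dif_neg h1, zero_mul]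
    rw [hm, zero_mul]
  · rw [mul_zero]

/-! conjugated character -/

/-- `Θ = conj ∘ θ`. -/
def Th (θ : AddChar F ℂ) : F → ℂ := fun t => (starRingEnd ℂ) (θ t)

lemma Th_zero (θ : AddChar F ℂ) : Th θ 0 = 1 := by
  simp [Th, AddChar.map_zero_eq_one]

lemma Th_add (θ : AddChar F ℂ) (s t : F) : Th θ (s + t) = Th θ s * Th θ t := by
  simp [Th, AddChar.map_add_eq_mul]

lemma Th_mul_neg (θ : AddChar F ℂ) (t : F) : Th θ (-t) * Th θ t = 1 := by
  rw [← Th_add, neg_add_cancel, Th_zero]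

lemma Th_ne_zero (θ : AddChar F ℂ) (t : F) : Th θ t ≠ 0 := by
  intro h
  have := Th_mul_neg θ t
  rw [h, mul_zero] at this
  exact zero_ne_one this

lemma Th_exists_ne_one (θ : AddChar F ℂ) (hθ : θ ≠ 1) : ∃ t : F, Th θ t ≠ 1 := by
  by_contra h
  push_neg at h
  apply hθ
  apply DFunLike.ext
  intro t
  have h1 : (starRingEnd ℂ) (θ t) = 1 := h t
  have h2 : θ t = (starRingEnd ℂ) ((starRingEnd ℂ) (θ t)) := by
    rw [Complex.conj_conj]
  rw [h2, h1]
  simp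

/-- A multiplicative function on a finite additive group that is somewhere `≠ 1` sums to `0`. -/
lemma sum_char_eq_zero {G : Type*} [AddCommGroup G] [Fintype G] (f : G → ℂ)
    (hf : ∀ x y : G, f (x + y) = f x * f y) (h1 : ∃ x, f x ≠ 1) :
    ∑ x : G, f x = 0 := by
  obtain ⟨x₀, hx⟩ := h1
  have key : f x₀ * ∑ x : G, f x = ∑ x : G, f x := by
    rw [Finset.mul_sum]
    calc ∑ x : G, f x₀ * f x = ∑ x : G, f (x₀ + x) := by
          exact Finset.sum_congr rfl fun x _ => (hf x₀ x).symm
      _ = ∑ x : G, f x := Equiv.sum_comp (Equiv.addLeft x₀) f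
  have h2 : (f x₀ - 1) * ∑ x : G, f x = 0 := by
    rw [sub_mul, one_mul, key, sub_self]
  rcases mul_eq_zero.mp h2 with h3 | h3
  · exact absurd (sub_eq_zero.mp h3) hx
  · exact h3

/-- Character sum over a submodule: vanishing functional case. -/
lemma submodule_char_sum_card {G : Type*} [AddCommGroup G] [Module F G]
    (θ : AddChar F ℂ) (W : Submodule F G) [Fintype ↥W] (L : G → F)
    (h0 : ∀ w ∈ W, L w = 0) :
    ∑ w : ↥W, Th θ (L w.val) = (Fintype.card ↥W : ℂ) := by
  rw [Finset.sum_congr rfl fun w _ => by rw [h0 w.val w.2, Th_zero]]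
  simp

/-- Character sum over a submodule: nonvanishing functional case. -/
lemma submodule_char_sum_zero {G : Type*} [AddCommGroup G] [Module F G]
    (θ : AddChar F ℂ) (hθ : θ ≠ 1) (W : Submodule F G) [Fintype ↥W] (L : G → F)
    (hadd : ∀ x y : G, L (x + y) = L x + L y) (hsmul : ∀ (c : F) (x : G), L (c • x) = c * L x)
    (hne : ∃ w ∈ W, L w ≠ 0) :
    ∑ w : ↥W, Th θ (L w.val) = 0 := by
  refine sum_char_eq_zero _ (fun x y => by rw [← Th_add, ← hadd x.val y.val]; rfl) ?_
  obtain ⟨w₀, hw₀, hLw⟩ := hne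
  obtain ⟨t₀, ht₀⟩ := Th_exists_ne_one θ hθ
  refine ⟨⟨(t₀ / L w₀) • w₀, W.smul_mem _ hw₀⟩, ?_⟩
  have : L ((t₀ / L w₀) • w₀) = t₀ := by
    rw [hsmul, div_mul_cancel₀ _ hLw]
  rw [this]
  exact ht₀

end Stmt15Char
section Stmt15Orbit
set_option linter.unusedSectionVars false
set_option linter.unusedVariables false

variable {F : Type*} [Field F] [Fintype F] [DecidableEq F] {n : ℕ}
variable {J : Finset (Pr n)}

lemma XS_add (a b : {p // p ∈ J} → F) : XS J (a + b) = XS J a + XS J b := by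
  ext i j
  simp only [XS_apply, Matrix.add_apply, Pi.add_apply]
  split_ifs <;> simp

lemma XS_smul (c : F) (a : {p // p ∈ J} → F) : XS J (c • a) = c • XS J a := by
  ext i j
  simp only [XS_apply, Matrix.smul_apply, Pi.smul_apply, smul_eq_mul]
  split_ifs <;> simp

/-- `XS` as a linear map. -/
def XSlin (J : Finset (Pr n)) : ({p // p ∈ J} → F) →ₗ[F] Matrix (Fin n) (Fin n) F where
  toFun := XS J
  map_add' := XS_add
  map_smul' := XS_smul

/-- The linear parametrization of the two-sided orbit of `X_φ`. -/
noncomputable def Tmap (J : Finset (Pr n)) (φ : Pr n → F) :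
    (({p // p ∈ J} → F) × ({p // p ∈ J} → F)) →ₗ[F] Matrix (Fin n) (Fin n) F :=
  ((LinearMap.mulRight F (Xmat J φ)).comp ((XSlin J).comp
    (LinearMap.fst F _ _))) +
  ((LinearMap.mulLeft F (Xmat J φ)).comp ((XSlin J).comp
    (LinearMap.snd F _ _)))

lemma Tmap_apply (φ : Pr n → F) (z : ({p // p ∈ J} → F) × ({p // p ∈ J} → F)) :
    Tmap J φ z = XS J z.1 * Xmat J φ + Xmat J φ * XS J z.2 := rfl

/-- The two-sided orbit is a coset of the range of `Tmap`. -/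
lemma biOrbit_eq_coset (hJ : Closed J)
    (h4 : ¬ ∃ i j k l : Fin n, (i, j) ∈ J ∧ (j, k) ∈ J ∧ (k, l) ∈ J) (φ : Pr n → F) :
    biOrbit J φ = (fun w => Xmat J φ + w) '' (LinearMap.range (Tmap J φ) : Set _) := by
  have hXφ : Xmat J φ ∈ nJset J := by rw [Xmat_eq_XS]; exact XS_mem_nJset _
  ext Y
  constructor
  · rintro ⟨u, v, hu, hv, rfl⟩
    set A := XS J (cdJ J u) with hA
    set B := XS J (cdJ J v) with hB
    have hu' : u = 1 + A := UJ_eq_one_add hJ hu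
    have hv' : v = 1 + B := UJ_eq_one_add hJ hv
    refine ⟨Tmap J φ (cdJ J u, cdJ J v), ⟨_, rfl⟩, ?_⟩
    rw [Tmap_apply]
    have e : u * Xmat J φ * v = Xmat J φ + (A * Xmat J φ + Xmat J φ * B)
        + A * Xmat J φ * B := by
      rw [hu', hv']; noncomm_ring
    rw [e, triple_zero h4 (XS_mem_nJset _) hXφ (XS_mem_nJset _), add_zero]
  · rintro ⟨w, ⟨z, rfl⟩, rfl⟩
    refine ⟨1 + XS J z.1, 1 + XS J z.2, one_add_mem_UJ hJ (XS_mem_nJset _),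
      one_add_mem_UJ hJ (XS_mem_nJset _), ?_⟩
    rw [Tmap_apply]
    have e : (1 + XS J z.1) * Xmat J φ * (1 + XS J z.2) =
        Xmat J φ + (XS J z.1 * Xmat J φ + Xmat J φ * XS J z.2)
        + XS J z.1 * Xmat J φ * XS J z.2 := by noncomm_ring
    rw [e, triple_zero h4 (XS_mem_nJset _) hXφ (XS_mem_nJset _), add_zero]

lemma biOrbit_card (hJ : Closed J)
    (h4 : ¬ ∃ i j k l : Fin n, (i, j) ∈ J ∧ (j, k) ∈ J ∧ (k, l) ∈ J) (φ : Pr n → F) :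
    Nat.card (biOrbit J φ) =
      Nat.card (LinearMap.range (Tmap J φ) : Set (Matrix (Fin n) (Fin n) F)) := by
  rw [biOrbit_eq_coset hJ h4 φ]
  exact Nat.card_image_of_injective (add_right_injective (Xmat J φ)) _

/-- The evaluation of the supercharacter. -/
lemma superchar_eval (hJ : Closed J)
    (h4 : ¬ ∃ i j k l : Fin n, (i, j) ∈ J ∧ (j, k) ∈ J ∧ (k, l) ∈ J)
    (θ : AddChar F ℂ) (hθ : θ ≠ 1) (η φ : Pr n → F) :
    superchar J θ η φ =
      if (MetaL J η).mulVec (fun p => φ p.1) = 0 ∧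
          Matrix.vecMul (fun p => φ p.1) (MetaL J η) = 0 then
        (Fintype.card F : ℂ) ^ corank J η * Th θ (ell J η (fun p => φ p.1))
      else 0 := by
  classical
  set rφ : {p // p ∈ J} → F := fun p => φ p.1 with hrφ
  have hXφ : Xmat J φ = XS J rφ := Xmat_eq_XS φ
  have hXφn : Xmat J φ ∈ nJset J := by rw [hXφ]; exact XS_mem_nJset _
  set Wsub := LinearMap.range (Tmap J φ) with hWsub
  haveI : Fintype ↥Wsub := Fintype.ofFinite _
  haveI : Fintype ↥(Wsub : Set (Matrix (Fin n) (Fin n) F)) := Fintype.ofFinite _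
  -- the finsum as a subtype sum
  have hsum : (∑ᶠ Y ∈ biOrbit J φ, (starRingEnd ℂ) (θ (lam J η Y))) =
      Th θ (lam J η (Xmat J φ)) * ∑ w : ↥Wsub, Th θ (lam J η w.val) := by
    rw [biOrbit_eq_coset hJ h4 φ,
      finsum_mem_image ((add_right_injective (Xmat J φ)).injOn),
      finsum_mem_eq_toFinset_sum]
    rw [Finset.sum_subtype ((Wsub : Set (Matrix (Fin n) (Fin n) F)).toFinset)
      (fun x => Set.mem_toFinset) (fun w => (starRingEnd ℂ) (θ (lam J η (Xmat J φ + w))))]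
    rw [Finset.mul_sum]
    refine Finset.sum_congr rfl fun w _ => ?_
    rw [show (starRingEnd ℂ) (θ (lam J η (Xmat J φ + w.val))) =
      Th θ (lam J η (Xmat J φ + w.val)) from rfl, lam_add, Th_add]
  -- identify membership of `lam` vanishing on `Wsub` with the matrix conditions
  have hc : (∀ w ∈ Wsub, lam J η w = 0) ↔
      ((MetaL J η).mulVec rφ = 0 ∧ Matrix.vecMul rφ (MetaL J η) = 0) := by
    constructor
    · intro hall
      constructor
      · funext q
        have h1 := hall (Tmap J φ (0, Pi.single q 1)) ⟨_, rfl⟩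
        rw [Tmap_apply] at h1
        simp only [hXφ] at h1
        rw [show XS J (0 : {p // p ∈ J} → F) = 0 from by ext i j; simp [XS_apply],
          zero_mul, zero_add, lam_mul_eq_dot hJ] at h1
        rw [single_dotProduct, one_mul] at h1
        simpa using h1
      · funext q
        have h1 := hall (Tmap J φ (Pi.single q 1, 0)) ⟨_, rfl⟩
        rw [Tmap_apply] at h1
        simp only [hXφ] at h1
        rw [show XS J (0 : {p // p ∈ J} → F) = 0 from by ext i j; simp [XS_apply],
          mul_zero, add_zero, lam_mul_eq_dot hJ, Matrix.dotProduct_mulVec] at h1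
        rw [dotProduct_single, mul_one] at h1
        simpa using h1
    · rintro ⟨h1, h2⟩ w ⟨z, rfl⟩
      rw [Tmap_apply, lam_add]
      simp only [hXφ]
      rw [lam_mul_eq_dot hJ, lam_mul_eq_dot hJ, h1, dotProduct_zero,
        Matrix.dotProduct_mulVec, h2, zero_dotProduct, add_zero]
  rw [superchar, hsum]
  by_cases hcond : (MetaL J η).mulVec rφ = 0 ∧ Matrix.vecMul rφ (MetaL J η) = 0
  · rw [if_pos hcond]
    rw [submodule_char_sum_card θ Wsub (lam J η) (hc.mpr hcond)]
    have hb : (Nat.card (biOrbit J φ) : ℂ) = (Fintype.card ↥Wsub : ℂ) := by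
      rw [biOrbit_card hJ h4 φ]
      norm_cast
      exact Nat.card_eq_fintype_card
    rw [hb]
    have hcard : (Fintype.card ↥Wsub : ℂ) ≠ 0 := by
      simp [Fintype.card_ne_zero]
    have hlx : lam J η (Xmat J φ) = ell J η rφ := by rw [hXφ, lam_XS]
    rw [hlx]
    field_simp
  · rw [if_neg hcond]
    have hex : ∃ w ∈ Wsub, lam J η w ≠ 0 := by
      by_contra hno
      push_neg at hno
      exact hcond (hc.mp hno)
    rw [submodule_char_sum_zero θ hθ Wsub (lam J η) (lam_add η) (lam_smul η) hex]
    ring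

end Stmt15Orbit
section Stmt15Rep
set_option linter.unusedSectionVars false
set_option linter.unusedVariables false

variable {F : Type*} [Field F] [Fintype F] [DecidableEq F] {n : ℕ}
variable {J : Finset (Pr n)}

/-- The representation space: the column space of `M_L^η`. -/
noncomputable def Vsp (J : Finset (Pr n)) (η : Pr n → F) :
    Submodule F ({p // p ∈ J} → F) := LinearMap.range (MetaL J η).mulVecLin

/-- The degree. -/
noncomputable def dd (J : Finset (Pr n)) (η : Pr n → F) : ℕ := Nat.card ↥(Vsp J η)

/-- An indexing of the representation space. -/
noncomputable def eV (J : Finset (Pr n)) (η : Pr n → F) : Fin (dd J η) ≃ ↥(Vsp J η) :=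
  haveI : Fintype ↥(Vsp J η) := Fintype.ofFinite _
  (Fintype.equivFinOfCardEq (by rw [dd, Nat.card_eq_fintype_card])).symm

/-- The representation. -/
noncomputable def rho (J : Finset (Pr n)) (η : Pr n → F) (θ : AddChar F ℂ)
    (A : Matrix (Fin n) (Fin n) F) : Matrix (Fin (dd J η)) (Fin (dd J η)) ℂ :=
  Matrix.of fun i j =>
    if ((eV J η j : {p // p ∈ J} → F)) =
        (eV J η i : {p // p ∈ J} → F) + (MetaL J η).mulVec (cdJ J A) then
      Th θ (ell J η (cdJ J A) + cdJ J A ⬝ᵥ ((eV J η i : {p // p ∈ J} → F)))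
    else 0

lemma cdJ_one (hJ : Closed J) : cdJ J (1 : Matrix (Fin n) (Fin n) F) = 0 := by
  funext p
  have hne : (p : Pr n).1 ≠ (p : Pr n).2 := ne_of_lt (hJ.1 _ p.2)
  simp [cdJ, Matrix.one_apply_ne hne]

lemma ell_add (η : Pr n → F) (a b : {p // p ∈ J} → F) :
    ell J η (a + b) = ell J η a + ell J η b := by
  rw [ell, ell, ell, ← Finset.sum_add_distrib]
  exact Finset.sum_congr rfl fun p _ => by rw [Pi.add_apply, mul_add]

lemma ell_zero (η : Pr n → F) : ell J η (0 : {p // p ∈ J} → F) = 0 := by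
  simp [ell]

lemma rho_one (hJ : Closed J) (η : Pr n → F) (θ : AddChar F ℂ) :
    rho J η θ 1 = 1 := by
  ext i j
  rw [rho, Matrix.of_apply, cdJ_one hJ, Matrix.one_apply]
  rw [Matrix.mulVec_zero, add_zero, ell_zero, zero_dotProduct, add_zero, Th_zero]
  by_cases h : i = j
  · subst h
    rw [if_pos rfl, if_pos rfl]
  · rw [if_neg h, if_neg]
    intro hval
    exact h (((eV J η).injective (Subtype.val_injective hval))).symm

lemma cdJ_mul_of_mem (hJ : Closed J) {A B : Matrix (Fin n) (Fin n) F}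
    (hA : A ∈ UJ J) (hB : B ∈ UJ J) :
    cdJ J (A * B) = cdJ J A + cdJ J B + cdJ J (XS J (cdJ J A) * XS J (cdJ J B)) := by
  have hA' : A = 1 + XS J (cdJ J A) := UJ_eq_one_add hJ hA
  have hB' : B = 1 + XS J (cdJ J B) := UJ_eq_one_add hJ hB
  funext p
  have hne : (p : Pr n).1 ≠ (p : Pr n).2 := ne_of_lt (hJ.1 _ p.2)
  have e : A * B = 1 + (XS J (cdJ J A) + XS J (cdJ J B)
      + XS J (cdJ J A) * XS J (cdJ J B)) := by
    nth_rewrite 1 [hA', hB']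
    noncomm_ring
  rw [show cdJ J (A * B) p = (A * B) (p : Pr n).1 (p : Pr n).2 from rfl, e]
  simp only [Matrix.add_apply, Matrix.one_apply_ne hne, zero_add, Pi.add_apply]
  simp only [XS_apply]
  rw [dif_pos p.2, dif_pos p.2]
  rfl

lemma rho_mul (hJ : Closed J)
    (h4 : ¬ ∃ i j k l : Fin n, (i, j) ∈ J ∧ (j, k) ∈ J ∧ (k, l) ∈ J)
    (η : Pr n → F) (θ : AddChar F ℂ) {A B : Matrix (Fin n) (Fin n) F}
    (hA : A ∈ UJ J) (hB : B ∈ UJ J) :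
    rho J η θ (A * B) = rho J η θ A * rho J η θ B := by
  classical
  set M := MetaL J η with hM
  set a := cdJ J A with ha
  set b := cdJ J B with hb
  set m := cdJ J (XS J a * XS J b) with hm
  have key0 : cdJ J (A * B) = a + b + m := cdJ_mul_of_mem hJ hA hB
  have key1 : M.mulVec m = 0 := mulVec_metaL_prod h4 η a b
  have key2 : Matrix.vecMul m M = 0 := vecMul_prod_metaL h4 η a b
  have key3 : ell J η m = b ⬝ᵥ M.mulVec a := by
    rw [← lam_XS, XS_cdJ (nJset_mul hJ (XS_mem_nJset a) (XS_mem_nJset b)),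
      lam_mul_eq_dot hJ]
  have hmdot : ∀ v : ↥(Vsp J η), m ⬝ᵥ (v : {p // p ∈ J} → F) = 0 := by
    intro v
    obtain ⟨x, hx⟩ := v.2
    have hv : (v : {p // p ∈ J} → F) = M.mulVec x := by rw [← hx]; rfl
    rw [hv, Matrix.dotProduct_mulVec, key2, zero_dotProduct]
  ext i k
  -- the unique intermediate index
  have hmemA : M.mulVec a ∈ Vsp J η := ⟨a, rfl⟩
  set vA : ↥(Vsp J η) := ⟨M.mulVec a, hmemA⟩ with hvA
  set j₀ : Fin (dd J η) := (eV J η).symm (eV J η i + vA) with hj₀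
  have hcond : ∀ j, ((eV J η j : {p // p ∈ J} → F) =
      (eV J η i : {p // p ∈ J} → F) + M.mulVec a) ↔ j = j₀ := by
    intro j
    constructor
    · intro hval
      have : eV J η j = eV J η i + vA := Subtype.val_injective hval
      rw [hj₀, ← this, Equiv.symm_apply_apply]
    · rintro rfl
      rw [hj₀, Equiv.apply_symm_apply]
      rfl
  rw [Matrix.mul_apply]
  rw [Finset.sum_eq_single j₀ (fun j _ hj => by
      rw [rho, Matrix.of_apply, if_neg, zero_mul]
      rw [← ha]
      exact fun hval => hj ((hcond j).mp hval))
    (fun hni => absurd (Finset.mem_univ j₀) hni)]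
  -- now compare the two sides at `j₀`
  rw [rho, rho, rho, Matrix.of_apply, Matrix.of_apply, Matrix.of_apply]
  rw [← ha, ← hb, key0, ← hM]
  have hval₀ : (eV J η j₀ : {p // p ∈ J} → F) =
      (eV J η i : {p // p ∈ J} → F) + M.mulVec a := (hcond j₀).mpr rfl
  have hMsum : M.mulVec (a + b + m) = M.mulVec a + M.mulVec b := by
    rw [Matrix.mulVec_add, Matrix.mulVec_add, key1, add_zero]
  by_cases hk : (eV J η k : {p // p ∈ J} → F) =
      (eV J η i : {p // p ∈ J} → F) + M.mulVec a + M.mulVec b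
  · have c1 : (eV J η k : {p // p ∈ J} → F) =
        (eV J η i : {p // p ∈ J} → F) + M.mulVec (a + b + m) := by
      rw [hMsum, ← add_assoc]; exact hk
    have c3 : (eV J η k : {p // p ∈ J} → F) =
        (eV J η j₀ : {p // p ∈ J} → F) + M.mulVec b := by rw [hval₀]; exact hk
    rw [if_pos c1]
    rw [if_pos hval₀]
    rw [if_pos c3]
    rw [← Th_add]
    congr 1
    rw [hval₀, ell_add, ell_add, key3, add_dotProduct, add_dotProduct,
      hmdot (eV J η i), dotProduct_add]
    ring
  · have c1 : ¬ ((eV J η k : {p // p ∈ J} → F) =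
        (eV J η i : {p // p ∈ J} → F) + M.mulVec (a + b + m)) := fun h => hk (by
      rw [hMsum, ← add_assoc] at h; exact h)
    have c3 : ¬ ((eV J η k : {p // p ∈ J} → F) =
        (eV J η j₀ : {p // p ∈ J} → F) + M.mulVec b) := fun h => hk (by
      rw [hval₀] at h; exact h)
    rw [if_neg c1]
    rw [if_neg c3]
    rw [mul_zero]

end Stmt15Rep
section Stmt15Trace
set_option linter.unusedSectionVars false
set_option linter.unusedVariables false

variable {F : Type*} [Field F] [Fintype F] [DecidableEq F] {n : ℕ}
variable {J : Finset (Pr n)}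

lemma cdJ_one_add_Xmat (hJ : Closed J) (φ : Pr n → F) :
    cdJ J (1 + Xmat J φ) = fun p => φ p.1 := by
  funext p
  have hne : (p : Pr n).1 ≠ (p : Pr n).2 := ne_of_lt (hJ.1 _ p.2)
  have hpm : ((p : Pr n).1, (p : Pr n).2) ∈ J := p.2
  simp [cdJ, Matrix.add_apply, Matrix.one_apply_ne hne, Xmat, hpm]

lemma card_V (J : Finset (Pr n)) (η : Pr n → F) [Fintype ↥(Vsp J η)] :
    Fintype.card ↥(Vsp J η) = Fintype.card F ^ corank J η := by
  rw [Module.card_eq_pow_finrank (K := F) (V := ↥(Vsp J η))]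
  congr 1

lemma rho_trace (hJ : Closed J)
    (h4 : ¬ ∃ i j k l : Fin n, (i, j) ∈ J ∧ (j, k) ∈ J ∧ (k, l) ∈ J)
    (θ : AddChar F ℂ) (hθ : θ ≠ 1) (η φ : Pr n → F) :
    (rho J η θ (1 + Xmat J φ)).trace = superchar J θ η φ := by
  classical
  haveI : Fintype ↥(Vsp J η) := Fintype.ofFinite _
  set M := MetaL J η with hM
  set rφ : {p // p ∈ J} → F := fun p => φ p.1 with hrφ
  have hcd : cdJ J (1 + Xmat J φ) = rφ := cdJ_one_add_Xmat hJ φ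
  rw [superchar_eval hJ h4 θ hθ η φ, Matrix.trace]
  have hdiag : ∀ i, (rho J η θ (1 + Xmat J φ)).diag i =
      if M.mulVec rφ = 0 then Th θ (ell J η rφ + rφ ⬝ᵥ (eV J η i : {p // p ∈ J} → F))
      else 0 := by
    intro i
    show rho J η θ (1 + Xmat J φ) i i = _
    rw [rho, Matrix.of_apply, hcd, ← hM]
    by_cases h : M.mulVec rφ = 0
    · rw [if_pos h, if_pos (by rw [h, add_zero])]
    · rw [if_neg h, if_neg (fun hc => h (left_eq_add.mp hc))]
  rw [Finset.sum_congr rfl fun i _ => hdiag i]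
  by_cases h1 : M.mulVec rφ = 0
  · simp only [if_pos h1]
    have hre : ∑ i : Fin (dd J η), Th θ (ell J η rφ + rφ ⬝ᵥ (eV J η i : {p // p ∈ J} → F)) =
        Th θ (ell J η rφ) *
          ∑ v : ↥(Vsp J η), Th θ (rφ ⬝ᵥ (v : {p // p ∈ J} → F)) := by
      rw [Finset.mul_sum]
      rw [← Equiv.sum_comp (eV J η)
        (fun v => Th θ (ell J η rφ) * Th θ (rφ ⬝ᵥ (v : {p // p ∈ J} → F)))]
      exact Finset.sum_congr rfl fun i _ => by rw [← Th_add]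
    rw [hre]
    by_cases h2 : Matrix.vecMul rφ M = 0
    · rw [if_pos ⟨h1, h2⟩]
      have h0 : ∀ w ∈ Vsp J η, rφ ⬝ᵥ w = 0 := by
        rintro w ⟨x, hx⟩
        rw [← hx, Matrix.mulVecLin_apply, Matrix.dotProduct_mulVec, h2,
          zero_dotProduct]
      rw [submodule_char_sum_card θ (Vsp J η) (fun g => rφ ⬝ᵥ g) h0]
      rw [card_V J η]
      push_cast
      ring
    · rw [if_neg (fun hc => h2 hc.2)]
      have hex : ∃ w ∈ Vsp J η, rφ ⬝ᵥ w ≠ 0 := by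
        have : ∃ q₀, Matrix.vecMul rφ M q₀ ≠ 0 := by
          by_contra hno
          push_neg at hno
          exact h2 (funext hno)
        obtain ⟨q₀, hq₀⟩ := this
        refine ⟨M.mulVec (Pi.single q₀ 1), ⟨Pi.single q₀ 1, rfl⟩, ?_⟩
        rwa [Matrix.dotProduct_mulVec, dotProduct_single, mul_one]
      rw [submodule_char_sum_zero θ hθ (Vsp J η) (fun g => rφ ⬝ᵥ g)
        (fun x y => dotProduct_add rφ x y)
        (fun c x => by
          show rφ ⬝ᵥ (c • x) = c * (rφ ⬝ᵥ x)
          rw [dotProduct_smul c rφ x, smul_eq_mul]) hex, mul_zero]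
  · rw [if_neg (fun hc => h1 hc.1)]
    simp only [if_neg h1]
    exact Finset.sum_const_zero
end Stmt15Trace
section Stmt15Irred
set_option linter.unusedSectionVars false
set_option linter.unusedVariables false

variable {F : Type*} [Field F] [Fintype F] [DecidableEq F] {n : ℕ}
variable {J : Finset (Pr n)}

lemma cdJ_one_add_XS (hJ : Closed J) (a : {p // p ∈ J} → F) :
    cdJ J (1 + XS J a) = a := by
  funext p
  have hne : (p : Pr n).1 ≠ (p : Pr n).2 := ne_of_lt (hJ.1 _ p.2)
  show (1 + XS J a) (p : Pr n).1 (p : Pr n).2 = a p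
  rw [Matrix.add_apply, Matrix.one_apply_ne hne, XS_apply, dif_pos p.2, zero_add]

/-- The auxiliary submodule `K₀` of coordinates supported away from arcs whose target has
out-arrows. -/
def K0 (J : Finset (Pr n)) : Submodule F ({p // p ∈ J} → F) where
  carrier := {a | ∀ q : {p // p ∈ J}, (∃ l, ((q : Pr n).2, l) ∈ J) → a q = 0}
  add_mem' := fun ha hb q hq => by
    rw [Pi.add_apply, ha q hq, hb q hq, add_zero]
  zero_mem' := fun q hq => rfl
  smul_mem' := fun c a ha q hq => by
    rw [Pi.smul_apply, ha q hq, smul_zero]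

lemma K0_mulVec (η : Pr n → F) {a : {p // p ∈ J} → F} (ha : a ∈ K0 J) :
    (MetaL J η).mulVec a = 0 := by
  funext p
  rw [Matrix.mulVec, dotProduct, Pi.zero_apply]
  refine Finset.sum_eq_zero fun q _ => ?_
  rw [metaL_apply]
  split_ifs with h
  · rw [ha q ⟨(p : Pr n).2, by rw [h]; exact p.2⟩, mul_zero]
  · rw [zero_mul]

lemma K0_pair (h4 : ¬ ∃ i j k l : Fin n, (i, j) ∈ J ∧ (j, k) ∈ J ∧ (k, l) ∈ J)
    (η : Pr n → F) {y : {p // p ∈ J} → F} (hy : y ∈ Vsp J η) (hy0 : y ≠ 0) :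
    ∃ a ∈ K0 J, a ⬝ᵥ y ≠ 0 := by
  obtain ⟨x, hx⟩ := hy
  obtain ⟨p₀, hp₀⟩ : ∃ p₀, y p₀ ≠ 0 := Function.ne_iff.mp hy0
  have hrow : ∃ q', MetaL J η p₀ q' ≠ 0 := by
    have hsum : (MetaL J η).mulVec x p₀ ≠ 0 := by
      rw [show (MetaL J η).mulVec x = y from hx]
      exact hp₀
    rw [Matrix.mulVec, dotProduct] at hsum
    obtain ⟨q', -, hq'⟩ := Finset.exists_ne_zero_of_sum_ne_zero hsum
    exact ⟨q', fun h => hq' (by rw [h, zero_mul])⟩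
  obtain ⟨q', hq'⟩ := hrow
  have hcond : ((q' : Pr n).1, (p₀ : Pr n).1) ∈ J := by
    rw [metaL_apply] at hq'
    by_cases h : (q' : Pr n).2 = (p₀ : Pr n).1
    · rw [← h]; exact q'.2
    · exact absurd (if_neg h) hq'
  have hmem : (Pi.single p₀ 1 : {p // p ∈ J} → F) ∈ K0 J := by
    intro q hq
    by_cases hqp : q = p₀
    · exfalso
      obtain ⟨l, hl⟩ := hq
      subst hqp
      exact h4 ⟨(q' : Pr n).1, (q : Pr n).1, (q : Pr n).2, l, hcond, q.2, hl⟩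
    · exact Pi.single_eq_of_ne hqp 1
  refine ⟨Pi.single p₀ 1, hmem, ?_⟩
  rw [single_dotProduct, one_mul]
  exact hp₀

lemma rho_irred (hJ : Closed J)
    (h4 : ¬ ∃ i j k l : Fin n, (i, j) ∈ J ∧ (j, k) ∈ J ∧ (k, l) ∈ J)
    (θ : AddChar F ℂ) (hθ : θ ≠ 1) (η : Pr n → F)
    (W : Submodule ℂ (Fin (dd J η) → ℂ))
    (hW : ∀ A ∈ UJ J, ∀ w ∈ W, (rho J η θ A).mulVec w ∈ W) : W = ⊥ ∨ W = ⊤ := by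
  classical
  by_cases hbot : W = ⊥
  · exact Or.inl hbot
  right
  haveI : Fintype ↥(K0 J (F := F) (n := n)) := Fintype.ofFinite _
  obtain ⟨w, hwW, hw0⟩ := Submodule.ne_bot_iff W |>.mp hbot
  obtain ⟨i₀, hi₀⟩ : ∃ i₀, w i₀ ≠ 0 := Function.ne_iff.mp hw0
  -- Step 2: the delta function at `i₀` lies in `W`.
  have hsingle : (Pi.single i₀ (1 : ℂ) : Fin (dd J η) → ℂ) ∈ W := by
    set v₀ : {p // p ∈ J} → F := (eV J η i₀ : {p // p ∈ J} → F) with hv₀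
    set P : Fin (dd J η) → ℂ := ∑ a : ↥(K0 J),
      Th θ (-(ell J η a.val + a.val ⬝ᵥ v₀)) •
        (rho J η θ (1 + XS J a.val)).mulVec w with hP
    have hPW : P ∈ W := by
      refine Submodule.sum_mem W fun a _ => Submodule.smul_mem W _ ?_
      exact hW _ (one_add_mem_UJ hJ (XS_mem_nJset _)) w hwW
    have hrho : ∀ (a : ↥(K0 J)) (j : Fin (dd J η)),
        (rho J η θ (1 + XS J a.val)).mulVec w j =
          Th θ (ell J η a.val + a.val ⬝ᵥ (eV J η j : {p // p ∈ J} → F)) * w j := by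
      intro a j
      rw [Matrix.mulVec, dotProduct]
      rw [Finset.sum_eq_single j (fun k _ hk => ?_) (fun h => absurd (Finset.mem_univ j) h)]
      · rw [rho, Matrix.of_apply, cdJ_one_add_XS hJ, K0_mulVec η a.2, add_zero, if_pos rfl]
      · rw [rho, Matrix.of_apply, cdJ_one_add_XS hJ, K0_mulVec η a.2, add_zero, if_neg,
          zero_mul]
        exact fun hval => hk ((eV J η).injective (Subtype.val_injective hval))
    have hPj : ∀ j, P j =
        (∑ a : ↥(K0 J), Th θ (a.val ⬝ᵥ ((eV J η j : {p // p ∈ J} → F) - v₀))) * w j := by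
      intro j
      rw [hP]
      rw [Finset.sum_apply]
      rw [Finset.sum_mul]
      refine Finset.sum_congr rfl fun a _ => ?_
      rw [Pi.smul_apply, hrho a j, smul_eq_mul, ← mul_assoc, ← Th_add]
      congr 2
      rw [dotProduct_sub]
      ring
    have hSj : ∀ j, (∑ a : ↥(K0 J),
        Th θ (a.val ⬝ᵥ ((eV J η j : {p // p ∈ J} → F) - v₀))) =
          if j = i₀ then (Fintype.card ↥(K0 J (F := F) (n := n)) : ℂ) else 0 := by
      intro j
      by_cases hj : j = i₀
      · subst hj
        rw [if_pos rfl]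
        rw [Finset.sum_congr rfl fun a _ => by rw [sub_self, dotProduct_zero, Th_zero]]
        simp
      · rw [if_neg hj]
        set y := ((eV J η j : {p // p ∈ J} → F) - v₀) with hy
        have hymem : y ∈ Vsp J η := by
          rw [hy, hv₀]
          exact Submodule.sub_mem _ (eV J η j).2 (eV J η i₀).2
        have hyne : y ≠ 0 := by
          rw [hy, hv₀, sub_ne_zero]
          intro hval
          exact hj ((eV J η).injective (Subtype.val_injective hval))
        obtain ⟨a, haK, hay⟩ := K0_pair h4 η hymem hyne
        obtain ⟨t₀, ht₀⟩ := Th_exists_ne_one θ hθ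
        refine sum_char_eq_zero _ (fun x y' => by
          rw [← Th_add, ← add_dotProduct]; rfl) ?_
        refine ⟨⟨(t₀ / (a ⬝ᵥ y)) • a, Submodule.smul_mem _ _ haK⟩, ?_⟩
        have : ((t₀ / (a ⬝ᵥ y)) • a) ⬝ᵥ y = t₀ := by
          rw [smul_dotProduct, smul_eq_mul, div_mul_cancel₀ _ hay]
        rw [show (⟨(t₀ / (a ⬝ᵥ y)) • a, _⟩ : ↥(K0 J)).val = (t₀ / (a ⬝ᵥ y)) • a from rfl,
          this]
        exact ht₀
    have hPeq : P = ((Fintype.card ↥(K0 J (F := F) (n := n)) : ℂ) * w i₀) •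
        (Pi.single i₀ (1 : ℂ) : Fin (dd J η) → ℂ) := by
      funext j
      rw [hPj j, hSj j, Pi.smul_apply, Pi.single_apply, smul_eq_mul]
      by_cases hj : j = i₀
      · subst hj
        rw [if_pos rfl, if_pos rfl, mul_one]
      · rw [if_neg hj, if_neg hj, zero_mul, mul_zero]
    have hcne : ((Fintype.card ↥(K0 J (F := F) (n := n)) : ℂ) * w i₀) ≠ 0 := by
      refine mul_ne_zero ?_ hi₀
      exact_mod_cast Fintype.card_ne_zero
    have := Submodule.smul_mem W (((Fintype.card ↥(K0 J (F := F) (n := n)) : ℂ) * w i₀)⁻¹)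
      (hPeq ▸ hPW)
    rwa [inv_smul_smul₀ hcne] at this
  -- Step 3: all delta functions lie in `W`.
  have hall : ∀ j : Fin (dd J η), (Pi.single j (1 : ℂ) : Fin (dd J η) → ℂ) ∈ W := by
    intro j
    obtain ⟨x, hx⟩ := (eV J η i₀ - eV J η j).2
    have hx' : (MetaL J η).mulVec x =
        (eV J η i₀ : {p // p ∈ J} → F) - (eV J η j : {p // p ∈ J} → F) := hx
    set c : ℂ := Th θ (ell J η x + x ⬝ᵥ (eV J η j : {p // p ∈ J} → F)) with hc
    have hBW := hW _ (one_add_mem_UJ hJ (XS_mem_nJset x)) _ hsingle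
    have hform : (rho J η θ (1 + XS J x)).mulVec (Pi.single i₀ (1 : ℂ)) =
        c • (Pi.single j (1 : ℂ) : Fin (dd J η) → ℂ) := by
      funext k
      rw [Matrix.mulVec, dotProduct]
      rw [Finset.sum_eq_single i₀ (fun t _ ht => by
          rw [Pi.single_eq_of_ne ht, mul_zero])
        (fun h => absurd (Finset.mem_univ i₀) h)]
      rw [Pi.single_eq_same, mul_one, rho, Matrix.of_apply, cdJ_one_add_XS hJ, hx']
      rw [Pi.smul_apply, Pi.single_apply, smul_eq_mul]
      by_cases hk : k = j
      · subst hk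
        rw [if_pos (by abel), if_pos rfl, mul_one, hc]
      · rw [if_neg, if_neg hk, mul_zero]
        intro hval
        apply hk
        have h2 : (eV J η k : {p // p ∈ J} → F) +
            ((eV J η i₀ : {p // p ∈ J} → F) - (eV J η j : {p // p ∈ J} → F)) =
            (eV J η i₀ : {p // p ∈ J} → F) := hval.symm
        have h3 : (eV J η j : {p // p ∈ J} → F) +
            ((eV J η i₀ : {p // p ∈ J} → F) - (eV J η j : {p // p ∈ J} → F)) =
            (eV J η i₀ : {p // p ∈ J} → F) := by abel
        have : (eV J η k : {p // p ∈ J} → F) = (eV J η j : {p // p ∈ J} → F) :=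
          add_right_cancel (h2.trans h3.symm)
        exact (eV J η).injective (Subtype.val_injective this)
    have hcne : c ≠ 0 := Th_ne_zero θ _
    have := Submodule.smul_mem W c⁻¹ (hform ▸ hBW)
    rwa [inv_smul_smul₀ hcne] at this
  -- conclude
  rw [Submodule.eq_top_iff']
  intro u
  rw [pi_eq_sum_univ u]
  refine Submodule.sum_mem W fun j _ => Submodule.smul_mem W _ ?_
  have he : (fun j' => if j = j' then (1 : ℂ) else 0) =
      (Pi.single j 1 : Fin (dd J η) → ℂ) := by
    funext j'
    rw [Pi.single_apply]
    simp [eq_comm]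
  rw [he]
  exact hall j

end Stmt15Irred
theorem stmt15 {F : Type*} [Field F] [Fintype F] [DecidableEq F] {n : ℕ}
    (J : Finset (Pr n)) (hJ : Closed J)
    (θ : AddChar F ℂ) (hθ : θ ≠ 1)
    (h4 : ¬ ∃ i j k l : Fin n, (i, j) ∈ J ∧ (j, k) ∈ J ∧ (k, l) ∈ J) :
    (∀ φ : Pr n → F,
      (fun Y => 1 + Y) '' biOrbit J φ =
        {M : Matrix (Fin n) (Fin n) F | ∃ g h : Matrix (Fin n) (Fin n) F,
          g ∈ UJ J ∧ h ∈ UJ J ∧ g * h = 1 ∧ M = g * xmat J φ * h}) ∧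
    (∀ η : Pr n → F,
      IsIrredCharOn (UJ J) (fun A => superchar J θ η (fun p => A p.1 p.2))) := by
  constructor
  · exact fun φ => stmt15_part1 hJ h4 φ
  · intro η
    refine ⟨dd J η, ?_, rho J η θ, rho_one hJ η θ,
      fun A hA B hB => rho_mul hJ h4 η θ hA hB,
      fun W hW => rho_irred hJ h4 θ hθ η W hW, ?_⟩
    · rw [dd]
      exact Nat.card_pos
    · intro A hA
      have hXA : XS J (cdJ J A) = Xmat J (fun p => A p.1 p.2) := by
        rw [Xmat_eq_XS]
        rfl
      have hA' : A = 1 + Xmat J (fun p => A p.1 p.2) := by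
        rw [← hXA]
        exact UJ_eq_one_add hJ hA
      calc (rho J η θ A).trace
          = (rho J η θ (1 + Xmat J (fun p => A p.1 p.2))).trace := by rw [← hA']
        _ = superchar J θ η (fun p => A p.1 p.2) := rho_trace hJ h4 θ hθ η _

end SCT
end
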